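/- For every q > 0, every integer n ≥ 2 and every x ∈ [0,1]: R_{n,q}(t³,x) = x·v(q,x) + x(1 − v(q,x))/[n]_q² − ([n−1]_q [n−2]_q q² / [n]_q²) · x(1 − v(q,x)) v(q²,x), where t³ denotes the function t ↦ t³ on [0,1]. -/

import Mathlib

open Finset Filter

noncomputable section

/-- The q-integer `[n]_q = 1 + q + ⋯ + q^(n-1)`. -/
def qInt (q : ℝ) (n : ℕ) : ℝ := ∑ i ∈ Finset.range n, q ^ i

/-- The q-factorial `[n]_q!`. -/
def qFact (q : ℝ) : ℕ → ℝ
  | 0 => 1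
  | n + 1 => qFact q n * qInt q (n + 1)

/-- The q-binomial coefficient `[n k]_q`. -/
def qBinom (q : ℝ) (n k : ℕ) : ℝ := qFact q n / (qFact q k * qFact q (n - k))

/-- The Lupaş basis function `b_{nk}(q;x)`. -/
def lupasB (q : ℝ) (n k : ℕ) (x : ℝ) : ℝ :=
  qBinom q n k * q ^ (k * (k - 1) / 2) * x ^ k * (1 - x) ^ (n - k) /
    ∏ j ∈ Finset.range (n - 1), (1 - x + q ^ (j + 1) * x)

/-- The limit Lupaş basis function `b_{∞k}(q;x)` (for `0 < q < 1`, `x ∈ [0,1)`). -/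
def lupasBInf (q : ℝ) (k : ℕ) (x : ℝ) : ℝ :=
  q ^ (k * (k - 1) / 2) * (x / (1 - x)) ^ k /
    ((1 - q) ^ k * qFact q k * ∏' j : ℕ, (1 + q ^ j * (x / (1 - x))))

/-- The Lupaş q-analogue of the Bernstein operator `R_{n,q}(f,x)`. -/
def lupasR (q : ℝ) (n : ℕ) (f : ℝ → ℝ) (x : ℝ) : ℝ :=
  ∑ k ∈ Finset.range (n + 1), f (qInt q k / qInt q n) * lupasB q n k x

/-- The limit q-Lupaş operator `R_{∞,q}(f,x)` for `0 < q < 1`. -/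
def lupasRInfLow (q : ℝ) (f : ℝ → ℝ) (x : ℝ) : ℝ :=
  if x = 1 then f 1 else ∑' k : ℕ, f (1 - q ^ k) * lupasBInf q k x

/-- The limit q-Lupaş operator `R_{∞,q}(f,x)`: for `q > 1` it is defined by
reflection, `R_{∞,q}(f,x) = R_{∞,1/q}(g,1-x)` with `g(x) = f(1-x)`. -/
def lupasRInf (q : ℝ) (f : ℝ → ℝ) (x : ℝ) : ℝ :=
  if 1 < q then lupasRInfLow (1 / q) (fun t => f (1 - t)) (1 - x)
  else lupasRInfLow q f x

/-- The transform `v(q,x) = qx/(1-x+qx)`. -/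
def vq (q x : ℝ) : ℝ := q * x / (1 - x + q * x)

/-- `L_{n,q}(f,x) = R_{n,q}(f,x) - R_{∞,q}(f,x)`. -/
def lupasL (q : ℝ) (n : ℕ) (f : ℝ → ℝ) (x : ℝ) : ℝ :=
  lupasR q n f x - lupasRInf q f x

/-- The modulus of continuity `ω(f,t)` of `f` on `[0,1]`. -/
def omega1 (f : ℝ → ℝ) (t : ℝ) : ℝ :=
  sSup {d | ∃ x ∈ Set.Icc (0:ℝ) 1, ∃ y ∈ Set.Icc (0:ℝ) 1, |x - y| ≤ t ∧ d = |f x - f y|}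

/-- The second modulus of smoothness `ω₂(f,t)` of `f` on `[0,1]`. -/
def omega2 (f : ℝ → ℝ) (t : ℝ) : ℝ :=
  sSup {d | ∃ h, 0 ≤ h ∧ h ≤ t ∧ ∃ x, 0 ≤ x ∧ x ≤ 1 - 2 * h ∧
    d = |f (x + 2 * h) - 2 * f (x + h) + f x|}
lemma qInt_zero (q : ℝ) : qInt q 0 = 0 := by simp [qInt]
lemma qInt_succ' (q : ℝ) (n : ℕ) : qInt q (n+1) = qInt q n + q^n :=
  Finset.sum_range_succ _ n
lemma qInt_succ (q : ℝ) (n : ℕ) : qInt q (n+1) = 1 + q * qInt q n := by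
  unfold qInt
  rw [Finset.sum_range_succ']
  simp only [pow_succ, pow_zero]
  rw [← Finset.sum_mul]
  ring
lemma qInt_add (q : ℝ) (m l : ℕ) : qInt q (m + l) = qInt q m + q^m * qInt q l := by
  unfold qInt
  rw [Finset.sum_range_add, Finset.mul_sum]
  simp [pow_add]
lemma qInt_pos {q : ℝ} (hq : 0 < q) (n : ℕ) (hn : 0 < n) : 0 < qInt q n :=
  Finset.sum_pos (fun i _ => pow_pos hq i) (Finset.nonempty_range_iff.mpr hn.ne')
lemma qFact_succ (q : ℝ) (n : ℕ) : qFact q (n+1) = qFact q n * qInt q (n+1) := rfl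
lemma qFact_pos {q : ℝ} (hq : 0 < q) : ∀ n, 0 < qFact q n
  | 0 => one_pos
  | n+1 => mul_pos (qFact_pos hq n) (qInt_pos hq (n+1) n.succ_pos)
lemma qInt_geom (q : ℝ) : ∀ n, q ^ n = (q - 1) * qInt q n + 1
  | 0 => by simp [qInt]
  | n+1 => by rw [pow_succ, qInt_succ' q n, qInt_geom q n]; ring
lemma tri (k : ℕ) : (k+1)*k/2 = k*(k-1)/2 + k := by
  have h : Even (k * (k-1)) := by
    rcases k with _ | m
    · simp
    · simpa [mul_comm] using (Nat.even_mul_succ_self m)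
  obtain ⟨a, ha⟩ := h
  have h2 : (k+1)*k = k*(k-1) + 2*k := by
    rcases k with _ | m
    · rfl
    · simp [Nat.succ_sub_one]; ring
  rw [h2, ha]
  omega


/-- coefficient -/
def cc (q : ℝ) (n k : ℕ) : ℝ := qBinom q n k * q^(k*(k-1)/2)

lemma cc_zero {q : ℝ} (hq : 0 < q) (n : ℕ) : cc q n 0 = 1 := by
  unfold cc qBinom
  show qFact q n / (1 * qFact q (n-0)) * q ^ (0*(0-1)/2) = 1
  rw [Nat.sub_zero, one_mul, div_self (qFact_pos hq n).ne']
  norm_num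

lemma cc_top {q : ℝ} (hq : 0 < q) (n : ℕ) :
    cc q (n+1) (n+1) = cc q n n * q^n := by
  unfold cc qBinom
  rw [Nat.sub_self, Nat.sub_self]
  show qFact q (n+1) / (qFact q (n+1) * 1) * q ^ ((n+1)*n/2) = _
  rw [mul_one, div_self (qFact_pos hq (n+1)).ne', tri n, pow_add]
  show _ = qFact q n / (qFact q n * 1) * q ^ (n*(n-1)/2) * q^n
  rw [mul_one, div_self (qFact_pos hq n).ne']
  ring

lemma qshift {q : ℝ} (hq : 0 < q) (n k : ℕ) :
    qInt q (k+1) * cc q (n+1) (k+1) = qInt q (n+1) * (q^k * cc q n k) := by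
  have hfk := (qFact_pos hq k).ne'
  have hfnk := (qFact_pos hq (n-k)).ne'
  have hk1 := (qInt_pos hq (k+1) k.succ_pos).ne'
  unfold cc qBinom
  rw [Nat.succ_sub_succ, Nat.add_sub_cancel, tri k, pow_add, qFact_succ q n, qFact_succ q k]
  field_simp

lemma qpascal {q : ℝ} (hq : 0 < q) (n k : ℕ) (h : k < n) :
    cc q (n+1) (k+1) = cc q n (k+1) * q^(k+1) + cc q n k * q^k := by
  obtain ⟨m, rfl⟩ : ∃ m, n = k + 1 + m := ⟨n - k - 1, by omega⟩
  have hsub1 : k+1+m - k = m+1 := by omega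
  have hsub2 : k+1+m - (k+1) = m := by omega
  have hsub3 : k+1+m+1 - (k+1) = m+1 := by omega
  have hsplit : qInt q (k+1+m+1) = qInt q (k+1) + q^(k+1) * qInt q (m+1) := by
    rw [show k+1+m+1 = (k+1)+(m+1) from by omega]; exact qInt_add q (k+1) (m+1)
  unfold cc qBinom
  rw [Nat.add_sub_cancel, hsub1, hsub2, hsub3, tri k, pow_add]
  rw [qFact_succ q (k+1+m), qFact_succ q k, qFact_succ q m, hsplit]
  have h1 := (qFact_pos hq k).ne'
  have h2 := (qFact_pos hq m).ne'
  have h3 := (qInt_pos hq (k+1) k.succ_pos).ne'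
  have h4 := (qInt_pos hq (m+1) m.succ_pos).ne'
  have h5 := (qFact_pos hq (k+1+m)).ne'
  field_simp
  ring

lemma qgen {q : ℝ} (hq : 0 < q) : ∀ n, ∀ a b : ℝ,
    ∑ k ∈ Finset.range (n+1), cc q n k * a^k * b^(n-k) =
    ∏ j ∈ Finset.range n, (b + q^j * a) := by
  intro n
  induction n with
  | zero =>
    intro a b
    simp [cc_zero hq]
  | succ n ih =>
    intro a b
    have hL : ∑ k ∈ Finset.range (n+1+1), cc q (n+1) k * a^k * b^((n+1)-k)
        = b^(n+1)
          + ∑ k ∈ Finset.range n, cc q (n+1) (k+1) * a^(k+1) * b^(n-k)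
          + cc q (n+1) (n+1) * a^(n+1) := by
      rw [Finset.sum_range_succ', Finset.sum_range_succ]
      have e1 : ∑ k ∈ Finset.range n, cc q (n+1) (k+1) * a^(k+1) * b^((n+1)-(k+1))
          = ∑ k ∈ Finset.range n, cc q (n+1) (k+1) * a^(k+1) * b^(n-k) :=
        Finset.sum_congr rfl fun k _ => by rw [show (n+1)-(k+1) = n-k from by omega]
      rw [e1, cc_zero hq]
      simp only [Nat.sub_self, Nat.sub_zero, pow_zero, mul_one, one_mul]
      ring
    have hR : (∑ k ∈ Finset.range (n+1), cc q n k * (q*a)^k * b^(n-k)) * (b + a)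
        = b^(n+1)
          + ∑ k ∈ Finset.range n, (cc q n (k+1) * q^(k+1) + cc q n k * q^k) * a^(k+1) * b^(n-k)
          + cc q n n * q^n * a^(n+1) := by
      rw [mul_add, Finset.sum_mul, Finset.sum_mul,
        Finset.sum_range_succ' (fun k => cc q n k * (q*a)^k * b^(n-k) * b),
        Finset.sum_range_succ (fun k => cc q n k * (q*a)^k * b^(n-k) * a)]
      have e2 : ∑ k ∈ Finset.range n, cc q n (k+1) * (q*a)^(k+1) * b^(n-(k+1)) * b
          = ∑ k ∈ Finset.range n, cc q n (k+1) * q^(k+1) * a^(k+1) * b^(n-k) :=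
        Finset.sum_congr rfl fun k hk => by
          rw [show n-k = n-(k+1)+1 from by have := Finset.mem_range.mp hk; omega]
          ring
      have e3 : ∑ k ∈ Finset.range n, cc q n k * (q*a)^k * b^(n-k) * a
          = ∑ k ∈ Finset.range n, cc q n k * q^k * a^(k+1) * b^(n-k) :=
        Finset.sum_congr rfl fun k _ => by ring
      have e4 : ∑ k ∈ Finset.range n, (cc q n (k+1) * q^(k+1) + cc q n k * q^k) * a^(k+1) * b^(n-k)
          = ∑ k ∈ Finset.range n, (cc q n (k+1) * q^(k+1) * a^(k+1) * b^(n-k)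
              + cc q n k * q^k * a^(k+1) * b^(n-k)) :=
        Finset.sum_congr rfl fun k _ => by ring
      rw [e2, e3, e4, Finset.sum_add_distrib, cc_zero hq]
      simp only [Nat.sub_self, Nat.sub_zero, pow_zero, mul_one, one_mul]
      ring
    have e5 : ∏ j ∈ Finset.range n, (b + q^(j+1) * a) = ∏ j ∈ Finset.range n, (b + q^j * (q*a)) :=
      Finset.prod_congr rfl fun j _ => by ring
    rw [Finset.prod_range_succ', e5, ← ih (q*a) b, pow_zero, one_mul, hL, hR]
    have e6 : ∑ k ∈ Finset.range n, cc q (n+1) (k+1) * a^(k+1) * b^(n-k)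
        = ∑ k ∈ Finset.range n, (cc q n (k+1) * q^(k+1) + cc q n k * q^k) * a^(k+1) * b^(n-k) :=
      Finset.sum_congr rfl fun k hk => by rw [qpascal hq n k (Finset.mem_range.mp hk)]
    rw [e6, cc_top hq n]


lemma qmoment1 {q : ℝ} (hq : 0 < q) (n : ℕ) (a b : ℝ) :
    ∑ k ∈ Finset.range (n+2), qInt q k * (cc q (n+1) k * a^k * b^((n+1)-k)) =
    qInt q (n+1) * a * ∏ j ∈ Finset.range n, (b + q^(j+1) * a) := by
  rw [Finset.sum_range_succ'
    (fun k => qInt q k * (cc q (n+1) k * a^k * b^((n+1)-k)))]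
  have e1 : ∑ k ∈ Finset.range (n+1), qInt q (k+1) * (cc q (n+1) (k+1) * a^(k+1) * b^((n+1)-(k+1)))
      = ∑ k ∈ Finset.range (n+1), qInt q (n+1) * a * (cc q n k * (q*a)^k * b^(n-k)) :=
    Finset.sum_congr rfl fun k _ => by
      rw [show (n+1)-(k+1) = n-k from by omega]
      linear_combination (a^(k+1) * b^(n-k)) * qshift hq n k
  rw [e1, ← Finset.mul_sum, qgen hq n (q*a) b, qInt_zero]
  have e2 : ∏ j ∈ Finset.range n, (b + q^j * (q*a)) = ∏ j ∈ Finset.range n, (b + q^(j+1) * a) :=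
    Finset.prod_congr rfl fun j _ => by ring
  rw [e2]
  ring

lemma qmoment2 {q : ℝ} (hq : 0 < q) (n : ℕ) (a b : ℝ) :
    ∑ k ∈ Finset.range (n+3), qInt q k * qInt q (k-1) * (cc q (n+2) k * a^k * b^((n+2)-k)) =
    qInt q (n+2) * qInt q (n+1) * q * a^2 * ∏ j ∈ Finset.range n, (b + q^(j+2) * a) := by
  rw [Finset.sum_range_succ'
    (fun k => qInt q k * qInt q (k-1) * (cc q (n+2) k * a^k * b^((n+2)-k)))]
  have e1 : ∑ k ∈ Finset.range (n+2), qInt q (k+1) * qInt q (k+1-1) * (cc q (n+2) (k+1) * a^(k+1) * b^((n+2)-(k+1)))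
      = ∑ k ∈ Finset.range (n+2), qInt q (n+2) * a * (qInt q k * (cc q (n+1) k * (q*a)^k * b^((n+1)-k))) :=
    Finset.sum_congr rfl fun k _ => by
      rw [show (n+2)-(k+1) = (n+1)-k from by omega, show k+1-1 = k from by omega]
      linear_combination (qInt q k * a^(k+1) * b^((n+1)-k)) * qshift hq (n+1) k
  rw [e1, ← Finset.mul_sum, qmoment1 hq n (q*a) b, qInt_zero]
  have e2 : ∏ j ∈ Finset.range n, (b + q^(j+1) * (q*a)) = ∏ j ∈ Finset.range n, (b + q^(j+2) * a) :=
    Finset.prod_congr rfl fun j _ => by ring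
  rw [e2]
  ring

lemma qmoment3 {q : ℝ} (hq : 0 < q) (n : ℕ) (a b : ℝ) :
    ∑ k ∈ Finset.range (n+4), qInt q k * qInt q (k-1) * qInt q (k-2) * (cc q (n+3) k * a^k * b^((n+3)-k)) =
    qInt q (n+3) * qInt q (n+2) * qInt q (n+1) * q^3 * a^3 * ∏ j ∈ Finset.range n, (b + q^(j+3) * a) := by
  rw [Finset.sum_range_succ'
    (fun k => qInt q k * qInt q (k-1) * qInt q (k-2) * (cc q (n+3) k * a^k * b^((n+3)-k)))]
  have e1 : ∑ k ∈ Finset.range (n+3), qInt q (k+1) * qInt q (k+1-1) * qInt q (k+1-2) * (cc q (n+3) (k+1) * a^(k+1) * b^((n+3)-(k+1)))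
      = ∑ k ∈ Finset.range (n+3), qInt q (n+3) * a * (qInt q k * qInt q (k-1) * (cc q (n+2) k * (q*a)^k * b^((n+2)-k))) :=
    Finset.sum_congr rfl fun k _ => by
      rw [show (n+3)-(k+1) = (n+2)-k from by omega, show k+1-1 = k from by omega,
        show k+1-2 = k-1 from by omega]
      linear_combination (qInt q k * qInt q (k-1) * a^(k+1) * b^((n+2)-k)) * qshift hq (n+2) k
  rw [e1, ← Finset.mul_sum, qmoment2 hq n (q*a) b, qInt_zero]
  have e2 : ∏ j ∈ Finset.range n, (b + q^(j+2) * (q*a)) = ∏ j ∈ Finset.range n, (b + q^(j+3) * a) :=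
    Finset.prod_congr rfl fun j _ => by ring
  rw [e2]
  ring

lemma qmomentT {q : ℝ} (hq : 0 < q) (n : ℕ) (a b : ℝ) :
    ∑ k ∈ Finset.range (n+3), q^k * (qInt q k * qInt q (k-1)) * (cc q (n+2) k * a^k * b^((n+2)-k)) =
    qInt q (n+2) * qInt q (n+1) * q^3 * a^2 * ∏ j ∈ Finset.range n, (b + q^(j+3) * a) := by
  rw [Finset.sum_range_succ'
    (fun k => q^k * (qInt q k * qInt q (k-1)) * (cc q (n+2) k * a^k * b^((n+2)-k)))]
  have e1 : ∑ k ∈ Finset.range (n+2), q^(k+1) * (qInt q (k+1) * qInt q (k+1-1)) * (cc q (n+2) (k+1) * a^(k+1) * b^((n+2)-(k+1)))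
      = ∑ k ∈ Finset.range (n+2), qInt q (n+2) * (q*a) * (qInt q k * (cc q (n+1) k * (q^2*a)^k * b^((n+1)-k))) :=
    Finset.sum_congr rfl fun k _ => by
      rw [show (n+2)-(k+1) = (n+1)-k from by omega, show k+1-1 = k from by omega]
      linear_combination (q^(k+1) * qInt q k * a^(k+1) * b^((n+1)-k)) * qshift hq (n+1) k
  rw [e1, ← Finset.mul_sum, qmoment1 hq n (q^2*a) b, qInt_zero]
  have e2 : ∏ j ∈ Finset.range n, (b + q^(j+1) * (q^2*a)) = ∏ j ∈ Finset.range n, (b + q^(j+3) * a) :=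
    Finset.prod_congr rfl fun j _ => by ring
  rw [e2]
  ring

lemma qweight (q : ℝ) (k : ℕ) :
    (qInt q k)^3 = qInt q k + 2*q*(qInt q k * qInt q (k-1))
      + q^2*(qInt q k * qInt q (k-1) * qInt q (k-2))
      + q^k*(qInt q k * qInt q (k-1)) := by
  match k with
  | 0 => simp [qInt_zero]
  | 1 =>
    have h0 := qInt_zero q
    have h1 := qInt_succ q 0
    norm_num at h1 ⊢
    rw [h1, h0]
    ring
  | (m+2) =>
    rw [show m+2-1 = m+1 from by omega, show m+2-2 = m from by omega,
      show q^(m+2) = q^m*q^2 from by ring, qInt_geom q m,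
      qInt_succ q (m+1), qInt_succ q m]
    ring


set_option maxHeartbeats 2000000 in
theorem lupasR_third_moment (q : ℝ) (hq : 0 < q) (n : ℕ) (hn : 2 ≤ n)
    (x : ℝ) (hx : x ∈ Set.Icc (0:ℝ) 1) :
    lupasR q n (fun t => t ^ 3) x =
      x * vq q x + x * (1 - vq q x) / (qInt q n) ^ 2 -
        qInt q (n - 1) * qInt q (n - 2) * q ^ 2 / (qInt q n) ^ 2 *
          (x * (1 - vq q x) * vq (q ^ 2) x) := by
  obtain ⟨hx0, hx1⟩ := hx
  have hA : ∀ j : ℕ, 0 < 1 - x + q^j * x := by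
    intro j
    rcases eq_or_lt_of_le hx0 with h | h
    · rw [← h]; norm_num
    · nlinarith [pow_pos hq j]
  have hN : 0 < qInt q n := qInt_pos hq n (by omega)
  have hu : 0 ≤ qInt q (n-3) := Finset.sum_nonneg fun i _ => (pow_pos hq i).le
  rcases Nat.lt_or_ge n 3 with h3 | h3
  · -- n = 2
    have hn2 : n = 2 := by omega
    subst hn2
    have hA1 := (hA 1).ne'
    have hA2 := (hA 2).ne'
    have hNne := hN.ne'
    simp only [lupasR, lupasB, qBinom, qFact, qInt, vq, Finset.sum_range_succ,
      Finset.sum_range_zero, Finset.prod_range_succ, Finset.prod_range_zero] at *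
    norm_num at *
    field_simp
    simp only [show qFact q 0 = 1 from rfl, inv_one, mul_one]
    ring
  · -- n = m + 3
    obtain ⟨m, rfl⟩ : ∃ m, n = m + 3 := ⟨n - 3, by omega⟩
    have hNne := hN.ne'
    have hA1 := hA 1
    have hA2 := hA 2
    have hEpos : (0:ℝ) < ∏ j ∈ Finset.range m, (1 - x + q^(j+3) * x) :=
      Finset.prod_pos fun j _ => hA (j+3)
    have hDpos : (0:ℝ) < ∏ j ∈ Finset.range (m+2), (1 - x + q^(j+1) * x) :=
      Finset.prod_pos fun j _ => hA (j+1)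
    have key : lupasR q (m+3) (fun t => t ^ 3) x * ((qInt q (m+3))^3 * ∏ j ∈ Finset.range (m+2), (1 - x + q^(j+1) * x)) =
        ∑ k ∈ Finset.range (m+4), (qInt q k)^3 * (cc q (m+3) k * x^k * (1-x)^((m+3)-k)) := by
      simp only [lupasR, lupasB]
      rw [show m+3+1 = m+4 from by omega, show m+3-1 = m+2 from by omega, Finset.sum_mul]
      refine Finset.sum_congr rfl fun k hk => ?_
      simp only [cc]
      field_simp
      apply mul_div_cancel_right₀
      exact ne_of_gt (Finset.prod_pos fun j _ => by have := hA (j+1); linarith [mul_comm x (q^(j+1))])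
    have hM1 := qmoment1 hq (m+2) x (1-x)
    have hM2 := qmoment2 hq (m+1) x (1-x)
    have hM3 := qmoment3 hq m x (1-x)
    have hT := qmomentT hq (m+1) x (1-x)
    simp only [show m+2+2 = m+4 from by omega, show m+2+1 = m+3 from by omega] at hM1
    simp only [show m+1+3 = m+4 from by omega, show m+1+2 = m+3 from by omega,
      show m+1+1 = m+2 from by omega] at hM2 hT
    have hsum : ∑ k ∈ Finset.range (m+4), (qInt q k)^3 * (cc q (m+3) k * x^k * (1-x)^((m+3)-k))
        = qInt q (m+3) * x * (∏ j ∈ Finset.range (m+2), (1 - x + q^(j+1) * x))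
          + 2*q*(qInt q (m+3) * qInt q (m+2) * q * x^2 * ∏ j ∈ Finset.range (m+1), (1 - x + q^(j+2) * x))
          + q^2*(qInt q (m+3) * qInt q (m+2) * qInt q (m+1) * q^3 * x^3 * ∏ j ∈ Finset.range m, (1 - x + q^(j+3) * x))
          + qInt q (m+3) * qInt q (m+2) * q^3 * x^2 * ∏ j ∈ Finset.range (m+1), (1 - x + q^(j+3) * x) := by
      have hsplit : ∑ k ∈ Finset.range (m+4), (qInt q k)^3 * (cc q (m+3) k * x^k * (1-x)^((m+3)-k))
          = ∑ k ∈ Finset.range (m+4), (qInt q k * (cc q (m+3) k * x^k * (1-x)^((m+3)-k))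
              + (2*q*(qInt q k * qInt q (k-1) * (cc q (m+3) k * x^k * (1-x)^((m+3)-k)))
              + (q^2*(qInt q k * qInt q (k-1) * qInt q (k-2) * (cc q (m+3) k * x^k * (1-x)^((m+3)-k)))
              + q^k*(qInt q k * qInt q (k-1)) * (cc q (m+3) k * x^k * (1-x)^((m+3)-k))))) :=
        Finset.sum_congr rfl fun k _ => by
          linear_combination (cc q (m+3) k * x^k * (1-x)^((m+3)-k)) * qweight q k
      rw [hsplit, Finset.sum_add_distrib, Finset.sum_add_distrib, Finset.sum_add_distrib,
        ← Finset.mul_sum, ← Finset.mul_sum, hM1, hM2, hM3, hT]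
      ring
    have hfinal : lupasR q (m+3) (fun t => t ^ 3) x =
        (qInt q (m+3) * x * (∏ j ∈ Finset.range (m+2), (1 - x + q^(j+1) * x))
          + 2*q*(qInt q (m+3) * qInt q (m+2) * q * x^2 * ∏ j ∈ Finset.range (m+1), (1 - x + q^(j+2) * x))
          + q^2*(qInt q (m+3) * qInt q (m+2) * qInt q (m+1) * q^3 * x^3 * ∏ j ∈ Finset.range m, (1 - x + q^(j+3) * x))
          + qInt q (m+3) * qInt q (m+2) * q^3 * x^2 * ∏ j ∈ Finset.range (m+1), (1 - x + q^(j+3) * x))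
        / ((qInt q (m+3))^3 * ∏ j ∈ Finset.range (m+2), (1 - x + q^(j+1) * x)) := by
      rw [eq_div_iff (mul_ne_zero (pow_ne_zero _ hNne) hDpos.ne'), key, hsum]
    rw [hfinal, show m+3-1 = m+2 from by omega, show m+3-2 = m+1 from by omega]
    simp only [vq]
    have hDsplit : (∏ j ∈ Finset.range (m+2), (1 - x + q^(j+1) * x))
        = (1 - x + q*x) * ((1 - x + q^2*x) * ∏ j ∈ Finset.range m, (1 - x + q^(j+3) * x)) := by
      rw [Finset.prod_range_succ' (fun j => 1 - x + q^(j+1) * x),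
        Finset.prod_range_succ' (fun j => 1 - x + q^(j+1+1) * x)]
      have e : ∀ (l : Finset ℕ), ∏ j ∈ l, (1 - x + q^(j+1+1+1) * x) = ∏ j ∈ l, (1 - x + q^(j+3) * x) :=
        fun l => Finset.prod_congr rfl fun j _ => by rw [show j+1+1+1 = j+3 from by omega]
      rw [e]
      norm_num
      ring
    have hP2split : (∏ j ∈ Finset.range (m+1), (1 - x + q^(j+2) * x))
        = (1 - x + q^2*x) * ∏ j ∈ Finset.range m, (1 - x + q^(j+3) * x) := by
      rw [Finset.prod_range_succ' (fun j => 1 - x + q^(j+2) * x)]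
      have e : ∏ j ∈ Finset.range m, (1 - x + q^(j+1+2) * x) = ∏ j ∈ Finset.range m, (1 - x + q^(j+3) * x) :=
        Finset.prod_congr rfl fun j _ => by rw [show j+1+2 = j+3 from by omega]
      rw [e]
      ring
    have hPTsplit : (∏ j ∈ Finset.range (m+1), (1 - x + q^(j+3) * x))
        = (∏ j ∈ Finset.range m, (1 - x + q^(j+3) * x)) * (1 - x + q^(m+3) * x) :=
      Finset.prod_range_succ _ m
    rw [hDsplit, hP2split, hPTsplit]
    have r3 : qInt q (m+3) = 1 + q * qInt q (m+2) := qInt_succ q (m+2)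
    have r2 : qInt q (m+2) = 1 + q * qInt q (m+1) := qInt_succ q (m+1)
    have r1 : qInt q (m+1) = 1 + q * qInt q m := qInt_succ q m
    have r4 : q^(m+3) = ((q-1) * qInt q m + 1) * q^3 := by
      rw [show q^(m+3) = q^m * q^3 from by ring, qInt_geom q m]
    rw [r3, r2, r1, r4]
    have hu0 : 0 ≤ qInt q m := Finset.sum_nonneg fun i _ => (pow_pos hq i).le
    have hq1 : (0:ℝ) < 1 + q * qInt q m := by
      have := mul_nonneg hq.le hu0; linarith
    have hq2 : (0:ℝ) < 1 + q * (1 + q * qInt q m) := by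
      have := mul_pos hq hq1; linarith
    have hq3 : (0:ℝ) < 1 + q * (1 + q * (1 + q * qInt q m)) := by
      have := mul_pos hq hq2; linarith
    have hA1' : 1 - x + q * x ≠ 0 := by
      have h := (hA 1).ne'; rwa [pow_one] at h
    set E := ∏ j ∈ Finset.range m, (1 - x + q^(j+3) * x)
    field_simp [hA1', hA2.ne', hEpos.ne', hq3.ne']
    ring
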